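/- Let γ : [0,1] → ℝ² be a regular W^{2,1}-curve (both components in W^{2,1}(0,1) and |γ'| > 0 on [0,1]) whose boundary warp angles θ⁰, θ¹ (the angles between γ'(0), γ'(1) respectively and the chord from γ(0) to γ(1)) lie in [0, π/2). Then for every ε > 0, ε 𝓑[γ] + (1/ε)(𝓛[γ] − 𝓛[γ̄]) ≥ 4(2√2 − √(1+cos θ⁰) − √(1+cos θ¹)), where 𝓛[γ] := ∫₀¹ |γ'(t)| dt is the length, γ̄ is the straight segment from γ(0) to γ(1), and 𝓑[γ] := ∫₀¹ κ_γ(t)² |γ'(t)| dt is the bending energy with κ_γ := |γ'|⁻³ |γ₁'γ₂'' − γ₂'γ₁''|. -/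

import Mathlib

open Real Set MeasureTheory intervalIntegral


lemma sqrt_add_le' (x δ : ℝ) (hx : 0 ≤ x) (hδ : 0 ≤ δ) :
    Real.sqrt (x + δ) ≤ Real.sqrt x + Real.sqrt δ := by
  have h1 := Real.sqrt_nonneg x
  have h2 := Real.sqrt_nonneg δ
  have hx2 : Real.sqrt x ^ 2 = x := Real.sq_sqrt hx
  have hδ2 : Real.sqrt δ ^ 2 = δ := Real.sq_sqrt hδ
  have h3 : x + δ ≤ (Real.sqrt x + Real.sqrt δ) ^ 2 := by nlinarith
  calc Real.sqrt (x + δ) ≤ Real.sqrt ((Real.sqrt x + Real.sqrt δ) ^ 2) :=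
        Real.sqrt_le_sqrt h3
    _ = Real.sqrt x + Real.sqrt δ := Real.sqrt_sq (by positivity)

lemma var_bound (c c' ψ : ℝ → ℝ) (a b : ℝ) (hab : a ≤ b) (ha : 0 ≤ a) (hb : b ≤ 1)
    (hc : ∀ t ∈ Icc (0:ℝ) 1, HasDerivAt c (c' t) t)
    (hcb : ∀ t ∈ Icc (0:ℝ) 1, -1 ≤ c t ∧ c t ≤ 1)
    (hc'm : AEStronglyMeasurable c' volume)
    (hcm : Measurable c)
    (hcd : ∀ t ∈ Icc (0:ℝ) 1, |c' t| ≤ ψ t * Real.sqrt (2 + 2 * c t) / 2)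
    (hψnn : ∀ t ∈ Icc (0:ℝ) 1, 0 ≤ ψ t)
    (hψint : IntervalIntegrable ψ volume a b) :
    |Real.sqrt (2 + 2 * c b) - Real.sqrt (2 + 2 * c a)| ≤ (1/2) * ∫ t in a..b, ψ t := by
  have hsub : Icc a b ⊆ Icc (0:ℝ) 1 := Icc_subset_Icc ha hb
  have huIcc : uIcc a b = Icc a b := uIcc_of_le hab
  have huIoc : Set.uIoc a b = Ioc a b := uIoc_of_le hab
  refine le_of_forall_sub_le fun εd hεd => ?_
  rw [sub_le_iff_le_add]
  set δ : ℝ := (εd / 2) ^ 2 with hδdef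
  have hδpos : 0 < δ := by positivity
  have hδsqrt : Real.sqrt δ = εd / 2 := by
    rw [hδdef, Real.sqrt_sq (by linarith)]
  set g : ℝ → ℝ := fun t => Real.sqrt (2 + 2 * c t + δ) with hgdef
  have harg : ∀ t ∈ Icc (0:ℝ) 1, 0 < 2 + 2 * c t + δ := by
    intro t ht; have := (hcb t ht).1; nlinarith
  have hgpos : ∀ t ∈ Icc (0:ℝ) 1, 0 < g t := by
    intro t ht; exact Real.sqrt_pos.2 (harg t ht)
  have hgd : ∀ t ∈ Icc (0:ℝ) 1, HasDerivAt g (c' t / g t) t := by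
    intro t ht
    have h1 : HasDerivAt (fun t => 2 + 2 * c t + δ) (2 * c' t) t :=
      (((hc t ht).const_mul 2).const_add 2).add_const δ
    have h2 := h1.sqrt (ne_of_gt (harg t ht))
    convert h2 using 1
    rw [hgdef]
    field_simp
  -- bound the comparison between g and sqrt(2+2c)
  have hcomp : ∀ t ∈ Icc (0:ℝ) 1,
      |g t - Real.sqrt (2 + 2 * c t)| ≤ εd / 2 := by
    intro t ht
    have h0 : 0 ≤ 2 + 2 * c t := by have := (hcb t ht).1; linarith
    have h1 : Real.sqrt (2 + 2 * c t) ≤ g t := Real.sqrt_le_sqrt (by linarith)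
    have h2 : g t ≤ Real.sqrt (2 + 2 * c t) + Real.sqrt δ :=
      sqrt_add_le' _ _ h0 hδpos.le
    rw [abs_sub_le_iff]; constructor <;> [skip; linarith]
    rw [hδsqrt] at h2; linarith
  -- pointwise bound on the derivative of g
  have hgb : ∀ t ∈ Icc (0:ℝ) 1, |c' t / g t| ≤ ψ t / 2 := by
    intro t ht
    have hg := hgpos t ht
    have h0 : 0 ≤ 2 + 2 * c t := by have := (hcb t ht).1; linarith
    have h1 : Real.sqrt (2 + 2 * c t) ≤ g t := Real.sqrt_le_sqrt (by linarith)
    have h2 := hcd t ht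
    have hψ := hψnn t ht
    rw [abs_div, abs_of_pos hg, div_le_iff₀ hg]
    calc |c' t| ≤ ψ t * Real.sqrt (2 + 2 * c t) / 2 := h2
      _ ≤ ψ t / 2 * g t := by nlinarith
  -- integrability of the derivative
  have hψhalf : IntervalIntegrable (fun t => ψ t / 2) volume a b := hψint.div_const 2
  have hgm : Measurable g := by
    rw [hgdef]
    exact Real.continuous_sqrt.measurable.comp (((hcm.const_mul 2).const_add 2).add_const δ)
  have hint : IntervalIntegrable (fun t => c' t / g t) volume a b := by
    apply hψhalf.mono_fun
    · exact ((hc'm.restrict.aemeasurable.div hgm.aemeasurable.restrict).aestronglyMeasurable)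
    · rw [huIoc]
      refine (ae_restrict_iff' measurableSet_Ioc).2 (ae_of_all _ fun t ht => ?_)
      have ht' : t ∈ Icc (0:ℝ) 1 := hsub (Ioc_subset_Icc_self ht)
      have := hgb t ht'
      have hψ := hψnn t ht'
      simp only [Real.norm_eq_abs]
      rw [abs_of_nonneg (by positivity : (0:ℝ) ≤ ψ t / 2)]
      exact this
  -- FTC
  have hftc : g b - g a = ∫ t in a..b, c' t / g t := by
    refine (intervalIntegral.integral_eq_sub_of_hasDerivAt (fun t ht => ?_) hint).symm
    exact hgd t (hsub (huIcc ▸ ht))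
  have habs : |g b - g a| ≤ ∫ t in a..b, ψ t / 2 := by
    rw [hftc]
    calc |∫ t in a..b, c' t / g t| ≤ ∫ t in a..b, |c' t / g t| :=
          intervalIntegral.abs_integral_le_integral_abs hab
      _ ≤ ∫ t in a..b, ψ t / 2 := by
          apply intervalIntegral.integral_mono_on hab hint.abs hψhalf
          intro t ht; exact hgb t (hsub ht)
  have ha' : a ∈ Icc (0:ℝ) 1 := ⟨ha, le_trans hab hb⟩
  have hb' : b ∈ Icc (0:ℝ) 1 := ⟨le_trans ha hab, hb⟩
  have h1 := hcomp a ha'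
  have h2 := hcomp b hb'
  have h3 : (∫ t in a..b, ψ t / 2) = (1/2) * ∫ t in a..b, ψ t := by
    rw [intervalIntegral.integral_div]; ring
  rw [h3] at habs
  rw [abs_le] at habs h1 h2 ⊢
  constructor <;> linarith [h1.1, h1.2, h2.1, h2.2, habs.1, habs.2]



set_option maxHeartbeats 1000000

/-- for a regular `W^{2,1}`-curve `γ = (γ₁,γ₂)` with boundary warp angles
`θ0, θ1 ∈ [0,π/2)`, one has `ε𝓑[γ] + (1/ε)(𝓛[γ] − 𝓛[γ̄]) ≥ 𝓦[γ]`.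
Here `W^{2,1}` regularity is modelled by everywhere twice differentiable components with
integrable bending density, `𝓛[γ̄]` is the chord length, and the boundary warp angles are
the `arccos` of the normalized inner products of the endpoint tangents with the chord. -/
theorem curve_lower_bound
    (ε : ℝ) (hε : 0 < ε)
    (γ₁ γ₂ : ℝ → ℝ)
    (hγ₁ : ∀ t, DifferentiableAt ℝ γ₁ t) (hγ₁' : ∀ t, DifferentiableAt ℝ (deriv γ₁) t)
    (hγ₂ : ∀ t, DifferentiableAt ℝ γ₂ t) (hγ₂' : ∀ t, DifferentiableAt ℝ (deriv γ₂) t)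
    -- regularity: |γ'| > 0 on [0,1]
    (hreg : ∀ t ∈ Icc (0:ℝ) 1, 0 < Real.sqrt ((deriv γ₁ t) ^ 2 + (deriv γ₂ t) ^ 2))
    -- chord, length, bending energy
    (chord : ℝ) (hchord : chord = Real.sqrt ((γ₁ 1 - γ₁ 0) ^ 2 + (γ₂ 1 - γ₂ 0) ^ 2))
    (len : ℝ) (hlen : len = ∫ t in (0:ℝ)..1, Real.sqrt ((deriv γ₁ t) ^ 2 + (deriv γ₂ t) ^ 2))
    (bend : ℝ) (hbend : bend = ∫ t in (0:ℝ)..1,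
      (|deriv γ₁ t * deriv (deriv γ₂) t - deriv γ₂ t * deriv (deriv γ₁) t| /
        Real.sqrt ((deriv γ₁ t) ^ 2 + (deriv γ₂ t) ^ 2) ^ 3) ^ 2 *
      Real.sqrt ((deriv γ₁ t) ^ 2 + (deriv γ₂ t) ^ 2))
    (hbendint : IntervalIntegrable (fun t =>
      (|deriv γ₁ t * deriv (deriv γ₂) t - deriv γ₂ t * deriv (deriv γ₁) t| /
        Real.sqrt ((deriv γ₁ t) ^ 2 + (deriv γ₂ t) ^ 2) ^ 3) ^ 2 *
      Real.sqrt ((deriv γ₁ t) ^ 2 + (deriv γ₂ t) ^ 2)) volume 0 1)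
    -- boundary warp angles
    (θ0 θ1 : ℝ)
    (hθ0 : θ0 = Real.arccos
      (((γ₁ 1 - γ₁ 0) * deriv γ₁ 0 + (γ₂ 1 - γ₂ 0) * deriv γ₂ 0) /
        (Real.sqrt ((deriv γ₁ 0) ^ 2 + (deriv γ₂ 0) ^ 2) * chord)))
    (hθ1 : θ1 = Real.arccos
      (((γ₁ 1 - γ₁ 0) * deriv γ₁ 1 + (γ₂ 1 - γ₂ 0) * deriv γ₂ 1) /
        (Real.sqrt ((deriv γ₁ 1) ^ 2 + (deriv γ₂ 1) ^ 2) * chord)))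
    (hθ0lt : θ0 < π / 2) (hθ1lt : θ1 < π / 2) :
    ε * bend + (1/ε) * (len - chord) ≥
      4 * (2 * Real.sqrt 2 - Real.sqrt (1 + Real.cos θ0) - Real.sqrt (1 + Real.cos θ1)) := by
  -- abbreviations
  set A := γ₁ 1 - γ₁ 0 with hA
  set B := γ₂ 1 - γ₂ 0 with hB
  -- chord is positive
  have hchord0 : 0 ≤ chord := hchord ▸ Real.sqrt_nonneg _
  have hchordpos : 0 < chord := by
    rcases lt_or_eq_of_le hchord0 with h | h
    · exact h
    · exfalso
      rw [← h, mul_zero, div_zero, Real.arccos_zero] at hθ0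
      rw [hθ0] at hθ0lt
      exact absurd hθ0lt (lt_irrefl _)
  -- function abbreviations
  set s : ℝ → ℝ := fun t => Real.sqrt (deriv γ₁ t ^ 2 + deriv γ₂ t ^ 2) with hs
  set p : ℝ → ℝ := fun t => A * deriv γ₁ t + B * deriv γ₂ t with hp
  set q : ℝ → ℝ := fun t => A * deriv γ₂ t - B * deriv γ₁ t with hq
  set D : ℝ → ℝ := fun t =>
    deriv γ₁ t * deriv (deriv γ₂) t - deriv γ₂ t * deriv (deriv γ₁) t with hD
  set c : ℝ → ℝ := fun t => p t / (s t * chord) with hc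
  set K : ℝ → ℝ := fun t => |D t| / s t ^ 2 with hK
  set f : ℝ → ℝ := fun t => Real.sqrt (2 - 2 * c t) with hf
  set ψ : ℝ → ℝ := fun t => K t * f t with hψ
  set c' : ℝ → ℝ := fun t => -(D t * q t) / (chord * s t ^ 3) with hc'
  -- basic positivity and algebraic identities
  have hspos : ∀ t ∈ Icc (0:ℝ) 1, 0 < s t := hreg
  clear_value c' ψ f K c D q p s B A
  have hs2 : ∀ t, s t ^ 2 = deriv γ₁ t ^ 2 + deriv γ₂ t ^ 2 := by
    intro t; rw [hs]; exact Real.sq_sqrt (by positivity)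
  have hchord2 : A ^ 2 + B ^ 2 = chord ^ 2 := by
    rw [hchord, Real.sq_sqrt (by positivity)]
  have hlag : ∀ t, p t ^ 2 + q t ^ 2 = chord ^ 2 * s t ^ 2 := by
    intro t
    have h1 := hs2 t
    simp only [hp, hq]
    nlinarith [hchord2]
  -- |c| ≤ 1 on [0,1]
  have hcle : ∀ t ∈ Icc (0:ℝ) 1, -1 ≤ c t ∧ c t ≤ 1 := by
    intro t ht
    have hst := hspos t ht
    have habs : |c t| ≤ 1 := by
      rw [hc]
      rw [abs_div]
      rw [div_le_one (by positivity : (0:ℝ) < |s t * chord|)]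
      rw [abs_of_pos (mul_pos hst hchordpos)]
      have h1 : p t ^ 2 ≤ (s t * chord) ^ 2 := by nlinarith [hlag t, sq_nonneg (q t)]
      calc |p t| = Real.sqrt (p t ^ 2) := (Real.sqrt_sq_eq_abs _).symm
        _ ≤ Real.sqrt ((s t * chord) ^ 2) := Real.sqrt_le_sqrt h1
        _ = s t * chord := Real.sqrt_sq (by positivity)
    exact abs_le.1 habs
  -- derivative of c
  have hcd : ∀ t ∈ Icc (0:ℝ) 1, HasDerivAt c (c' t) t := by
    intro t ht
    have hst := hspos t ht
    have hsq : deriv γ₁ t ^ 2 + deriv γ₂ t ^ 2 ≠ 0 := by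
      intro h0
      rw [hs] at hst; simp only at hst
      rw [h0, Real.sqrt_zero] at hst; exact lt_irrefl _ hst
    have hud : HasDerivAt (deriv γ₁) (deriv (deriv γ₁) t) t := (hγ₁' t).hasDerivAt
    have hvd : HasDerivAt (deriv γ₂) (deriv (deriv γ₂) t) t := (hγ₂' t).hasDerivAt
    have hpd : HasDerivAt p (A * deriv (deriv γ₁) t + B * deriv (deriv γ₂) t) t := by
      rw [hp]; exact (hud.const_mul A).add (hvd.const_mul B)
    have hinner : HasDerivAt (fun t => deriv γ₁ t ^ 2 + deriv γ₂ t ^ 2)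
        (2 * deriv γ₁ t ^ 1 * deriv (deriv γ₁) t + 2 * deriv γ₂ t ^ 1 * deriv (deriv γ₂) t) t := by
      have h1 := hud.pow 2
      have h2 := hvd.pow 2
      norm_num at h1 h2 ⊢
      exact h1.add h2
    have hsd : HasDerivAt s
        ((2 * deriv γ₁ t ^ 1 * deriv (deriv γ₁) t + 2 * deriv γ₂ t ^ 1 * deriv (deriv γ₂) t) /
          (2 * Real.sqrt (deriv γ₁ t ^ 2 + deriv γ₂ t ^ 2))) t := by
      rw [hs]; exact hinner.sqrt hsq
    have hscd : HasDerivAt (fun t => s t * chord)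
        ((2 * deriv γ₁ t ^ 1 * deriv (deriv γ₁) t + 2 * deriv γ₂ t ^ 1 * deriv (deriv γ₂) t) /
          (2 * Real.sqrt (deriv γ₁ t ^ 2 + deriv γ₂ t ^ 2)) * chord) t := hsd.mul_const chord
    have hne : s t * chord ≠ 0 := ne_of_gt (mul_pos hst hchordpos)
    have h3 := hpd.div hscd hne
    rw [hc]
    convert h3 using 1
    · rfl
    · rfl
    · rfl
    have hsval : Real.sqrt (deriv γ₁ t ^ 2 + deriv γ₂ t ^ 2) = s t := by rw [hs]
    rw [hsval]
    have h4 := hs2 t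
    simp only [hc', hD, hq, hp]
    set ut := deriv γ₁ t with hut
    set vt := deriv γ₂ t with hvt
    set ut' := deriv (deriv γ₁) t with hut'
    set vt' := deriv (deriv γ₂) t with hvt'
    set st := s t with hst'
    have hstne : st ≠ 0 := ne_of_gt hst
    have hchne : chord ≠ 0 := ne_of_gt hchordpos
    clear_value st ut vt ut' vt'
    field_simp
    linear_combination (-(2 * B * vt' * st ^ 3 * chord ^ 2 + 2 * A * ut' * st ^ 3 * chord ^ 2 -
      A * vt' * ut * st * chord + A * ut' * vt * st * chord) -
      (A * st * chord * (ut * vt' - vt * ut')) -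
      (B * vt' + A * ut') * (1 - 2 * st ^ 3 * chord ^ 2)) * h4
  -- |c'| = ψ √(2+2c)/2 on [0,1]
  have hc'abs : ∀ t ∈ Icc (0:ℝ) 1, |c' t| = ψ t * Real.sqrt (2 + 2 * c t) / 2 := by
    intro t ht
    have hst := hspos t ht
    obtain ⟨hc1, hc2⟩ := hcle t ht
    have hstne : s t ≠ 0 := ne_of_gt hst
    have hchne : chord ≠ 0 := ne_of_gt hchordpos
    have hX2 : (2 - 2 * c t) * (2 + 2 * c t) = (2 * |q t| / (chord * s t)) ^ 2 := by
      have h1 := hlag t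
      rw [hc]
      rw [div_pow, mul_pow, sq_abs]
      field_simp
      linear_combination -h1
    have hfh : f t * Real.sqrt (2 + 2 * c t) = 2 * |q t| / (chord * s t) := by
      rw [hf, ← Real.sqrt_mul (by linarith : (0:ℝ) ≤ 2 - 2 * c t), hX2,
        Real.sqrt_sq (by positivity)]
    have hgoal : ψ t * Real.sqrt (2 + 2 * c t) / 2 = |D t| * |q t| / (chord * s t ^ 3) := by
      rw [hψ, hK, mul_assoc, hfh]
      field_simp
    have habs2 : |c' t| = |D t| * |q t| / (chord * s t ^ 3) := by
      rw [hc']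
      rw [abs_div, abs_neg, abs_mul, abs_of_pos (by positivity : (0:ℝ) < chord * s t ^ 3)]
    rw [habs2, hgoal]
  -- continuity and measurability
  have hucont : Continuous (deriv γ₁) :=
    continuous_iff_continuousAt.2 fun t => (hγ₁' t).continuousAt
  have hvcont : Continuous (deriv γ₂) :=
    continuous_iff_continuousAt.2 fun t => (hγ₂' t).continuousAt
  have hscont : Continuous s := by
    rw [hs]; exact Real.continuous_sqrt.comp ((hucont.pow 2).add (hvcont.pow 2))
  have hpcont : Continuous p := by
    rw [hp]; exact (continuous_const.mul hucont).add (continuous_const.mul hvcont)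
  have hqcont : Continuous q := by
    rw [hq]; exact (continuous_const.mul hvcont).sub (continuous_const.mul hucont)
  have humeas : Measurable (deriv (deriv γ₁)) := measurable_deriv _
  have hvmeas : Measurable (deriv (deriv γ₂)) := measurable_deriv _
  have hDmeas : Measurable D := by
    rw [hD]; exact (hucont.measurable.mul hvmeas).sub (hvcont.measurable.mul humeas)
  have hcmeas : Measurable c := by
    rw [hc]; exact hpcont.measurable.div (hscont.measurable.mul_const chord)
  have hc'meas : AEStronglyMeasurable c' volume := by
    rw [hc']
    exact (((hDmeas.mul hqcont.measurable).neg).div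
      ((hscont.measurable.pow_const 3).const_mul chord)).aestronglyMeasurable
  have hKmeas : Measurable K := by
    rw [hK]; exact hDmeas.abs.div (hscont.measurable.pow_const 2)
  have hfmeas : Measurable f := by
    rw [hf]
    exact Real.continuous_sqrt.measurable.comp (measurable_const.sub (hcmeas.const_mul 2))
  have hψmeas : Measurable ψ := by rw [hψ]; exact hKmeas.mul hfmeas
  have hψnn : ∀ t, 0 ≤ ψ t := fun t => by
    rw [hψ, hK, hf]
    positivity
  -- rewrite bend
  have hbendint' : IntervalIntegrable (fun t => (|D t| / s t ^ 3) ^ 2 * s t) volume 0 1 := by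
    simp only [hD, hs]; exact hbendint
  have hbend' : bend = ∫ t in (0:ℝ)..1, (|D t| / s t ^ 3) ^ 2 * s t := by
    rw [hbend]; simp only [hD, hs]
  -- length-defect integrand
  have hsfcont : Continuous (fun t => 2 * s t - 2 * p t / chord) :=
    (continuous_const.mul hscont).sub ((continuous_const.mul hpcont).div_const chord)
  have hsfint : IntervalIntegrable (fun t => 2 * s t - 2 * p t / chord) volume 0 1 :=
    hsfcont.intervalIntegrable 0 1
  have hsf : ∀ t ∈ Icc (0:ℝ) 1, s t * f t ^ 2 = 2 * s t - 2 * p t / chord := by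
    intro t ht
    have hst := hspos t ht
    have hstne : s t ≠ 0 := ne_of_gt hst
    have hchne : chord ≠ 0 := ne_of_gt hchordpos
    rw [hf, Real.sq_sqrt (by linarith [(hcle t ht).2] : (0:ℝ) ≤ 2 - 2 * c t), hc]
    field_simp
  -- pointwise AM-GM
  have hAMGM : ∀ t ∈ Icc (0:ℝ) 1, 2 * ψ t ≤
      Real.sqrt 2 * ε * ((|D t| / s t ^ 3) ^ 2 * s t) +
      1 / (Real.sqrt 2 * ε) * (2 * s t - 2 * p t / chord) := by
    intro t ht
    have hst := hspos t ht
    have hstne : s t ≠ 0 := ne_of_gt hst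
    have hsq2 : (0:ℝ) < Real.sqrt 2 := Real.sqrt_pos.2 two_pos
    have hKf : (|D t| / s t ^ 3) ^ 2 * s t = K t ^ 2 / s t := by
      rw [hK, div_pow, div_pow]
      field_simp
    rw [hKf, ← hsf t ht, hψ]
    have hKnn : 0 ≤ K t := by rw [hK]; positivity
    have hfnn : 0 ≤ f t := by rw [hf]; exact Real.sqrt_nonneg _
    set w := Real.sqrt 2 * ε with hwdef
    have hwpos : 0 < w := by positivity
    have h0 : w * (K t ^ 2 / s t) + 1 / w * (s t * f t ^ 2) - 2 * (K t * f t) =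
        (w * K t - s t * f t) ^ 2 / (w * s t) := by
      field_simp
      ring
    have h1 : 0 ≤ (w * K t - s t * f t) ^ 2 / (w * s t) :=
      div_nonneg (sq_nonneg _) (mul_pos hwpos hst).le
    linarith [h0, h1]
  -- integrability of ψ
  have hψint : IntervalIntegrable ψ volume 0 1 := by
    have hbound : IntervalIntegrable
        (fun t => ((|D t| / s t ^ 3) ^ 2 * s t + (2 * s t - 2 * p t / chord)) / 2)
        volume 0 1 := (hbendint'.add hsfint).div_const 2
    apply hbound.mono_fun hψmeas.aestronglyMeasurable.restrict
    rw [uIoc_of_le (by norm_num : (0:ℝ) ≤ 1)]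
    refine (ae_restrict_iff' measurableSet_Ioc).2 (ae_of_all _ fun t ht => ?_)
    have ht' : t ∈ Icc (0:ℝ) 1 := Ioc_subset_Icc_self ht
    have hst := hspos t ht'
    have hstne : s t ≠ 0 := ne_of_gt hst
    have hb2 : 2 * ψ t ≤ (|D t| / s t ^ 3) ^ 2 * s t + (2 * s t - 2 * p t / chord) := by
      have hKf : (|D t| / s t ^ 3) ^ 2 * s t = K t ^ 2 / s t := by
        rw [hK, div_pow, div_pow]; field_simp
      rw [hKf, ← hsf t ht', hψ]
      have hKnn : 0 ≤ K t := by rw [hK]; positivity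
      have hfnn : 0 ≤ f t := by rw [hf]; exact Real.sqrt_nonneg _
      have h0 : K t ^ 2 / s t + s t * f t ^ 2 - 2 * (K t * f t) =
          (K t - s t * f t) ^ 2 / s t := by field_simp; ring
      have h1 : 0 ≤ (K t - s t * f t) ^ 2 / s t := div_nonneg (sq_nonneg _) hst.le
      linarith
    have hψt := hψnn t
    simp only [Real.norm_eq_abs]
    rw [abs_of_nonneg hψt, abs_of_nonneg (by linarith : (0:ℝ) ≤
      ((|D t| / s t ^ 3) ^ 2 * s t + (2 * s t - 2 * p t / chord)) / 2)]
    linarith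
  -- FTC: integral of p and q
  have hpint : (∫ t in (0:ℝ)..1, p t) = chord ^ 2 := by
    have hF : ∀ t ∈ uIcc (0:ℝ) 1, HasDerivAt (fun t => A * γ₁ t + B * γ₂ t) (p t) t := by
      intro t _
      rw [hp]
      exact ((hγ₁ t).hasDerivAt.const_mul A).add ((hγ₂ t).hasDerivAt.const_mul B)
    rw [intervalIntegral.integral_eq_sub_of_hasDerivAt hF (hpcont.intervalIntegrable 0 1)]
    linear_combination hchord2 - A * hA - B * hB
  have hqint : (∫ t in (0:ℝ)..1, q t) = 0 := by
    have hF : ∀ t ∈ uIcc (0:ℝ) 1, HasDerivAt (fun t => A * γ₂ t - B * γ₁ t) (q t) t := by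
      intro t _
      rw [hq]
      exact ((hγ₂ t).hasDerivAt.const_mul A).sub ((hγ₁ t).hasDerivAt.const_mul B)
    rw [intervalIntegral.integral_eq_sub_of_hasDerivAt hF (hqcont.intervalIntegrable 0 1)]
    linear_combination -A * hB + B * hA
  -- existence of a zero of q on [0,1]
  have hts : ∃ ts ∈ Icc (0:ℝ) 1, q ts = 0 := by
    by_contra hno
    push_neg at hno
    have h01 : (0:ℝ) ∈ Icc (0:ℝ) 1 := by norm_num
    rcases lt_or_gt_of_ne (hno 0 h01) with hneg | hpos
    · have hall : ∀ t ∈ Icc (0:ℝ) 1, q t < 0 := by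
        intro t ht
        rcases lt_or_ge (q t) 0 with h | h
        · exact h
        · exfalso
          obtain ⟨x, hx, hx0⟩ := intermediate_value_Icc ht.1 hqcont.continuousOn
            (show (0:ℝ) ∈ Icc (q 0) (q t) from ⟨hneg.le, h⟩)
          exact hno x (⟨hx.1, le_trans hx.2 ht.2⟩) hx0
      have hlt : (∫ t in (0:ℝ)..1, -q t) > 0 := by
        apply intervalIntegral.intervalIntegral_pos_of_pos_on
          (hqcont.neg.intervalIntegrable 0 1)
        · intro x hx
          have := hall x ⟨hx.1.le, hx.2.le⟩
          exact neg_pos.2 this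
        · norm_num
      rw [intervalIntegral.integral_neg, hqint] at hlt
      norm_num at hlt
    · have hall : ∀ t ∈ Icc (0:ℝ) 1, 0 < q t := by
        intro t ht
        rcases lt_or_ge 0 (q t) with h | h
        · exact h
        · exfalso
          obtain ⟨x, hx, hx0⟩ := intermediate_value_Icc' ht.1 hqcont.continuousOn
            (show (0:ℝ) ∈ Icc (q t) (q 0) from ⟨h, hpos.le⟩)
          exact hno x (⟨hx.1, le_trans hx.2 ht.2⟩) hx0
      have hlt : (∫ t in (0:ℝ)..1, q t) > 0 := by
        apply intervalIntegral.intervalIntegral_pos_of_pos_on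
          (hqcont.intervalIntegrable 0 1)
        · intro x hx
          exact hall x ⟨hx.1.le, hx.2.le⟩
        · norm_num
      rw [hqint] at hlt
      norm_num at hlt
  obtain ⟨ts, hts01, hqts⟩ := hts
  -- value of c at the zero of q
  have hcts : c ts = 1 ∨ c ts = -1 := by
    have h1 := hlag ts
    have hst := hspos ts hts01
    have hstne : s ts ≠ 0 := ne_of_gt hst
    have hchne : chord ≠ 0 := ne_of_gt hchordpos
    have hsq : c ts ^ 2 = 1 := by
      rw [hc, div_pow]
      rw [hqts] at h1
      field_simp
      linear_combination h1
    have hmul : (c ts - 1) * (c ts + 1) = 0 := by nlinarith [hsq]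
    rcases mul_eq_zero.1 hmul with h | h
    · left; linarith
    · right; linarith
  have h01 : (0:ℝ) ∈ Icc (0:ℝ) 1 := by norm_num
  have h11 : (1:ℝ) ∈ Icc (0:ℝ) 1 := by norm_num
  -- cosine identities
  have hcos0 : Real.cos θ0 = c 0 := by
    have harg : (A * deriv γ₁ 0 + B * deriv γ₂ 0) /
        (Real.sqrt (deriv γ₁ 0 ^ 2 + deriv γ₂ 0 ^ 2) * chord) = c 0 := by
      simp only [hc, hp, hs]
    rw [hθ0, harg, Real.cos_arccos (hcle 0 h01).1 (hcle 0 h01).2]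
  have hcos1 : Real.cos θ1 = c 1 := by
    have harg : (A * deriv γ₁ 1 + B * deriv γ₂ 1) /
        (Real.sqrt (deriv γ₁ 1 ^ 2 + deriv γ₂ 1 ^ 2) * chord) = c 1 := by
      simp only [hc, hp, hs]
    rw [hθ1, harg, Real.cos_arccos (hcle 1 h11).1 (hcle 1 h11).2]
  have hc0pos : 0 < c 0 := by
    have h := hθ0lt
    rw [hθ0] at h
    have h2 := Real.arccos_lt_pi_div_two.1 h
    simpa only [hc, hp, hs] using h2
  have hc1pos : 0 < c 1 := by
    have h := hθ1lt
    rw [hθ1] at h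
    have h2 := Real.arccos_lt_pi_div_two.1 h
    simpa only [hc, hp, hs] using h2
  -- endpoint values of h
  set h0v := Real.sqrt (2 + 2 * c 0) with hh0
  set h1v := Real.sqrt (2 + 2 * c 1) with hh1
  have hfour : Real.sqrt 4 = 2 := by
    rw [show (4:ℝ) = 2 ^ 2 by norm_num, Real.sqrt_sq (by norm_num : (0:ℝ) ≤ 2)]
  have hh0ge : 1 ≤ h0v := by
    have h := Real.sqrt_le_sqrt (show (1:ℝ) ≤ 2 + 2 * c 0 by linarith [hc0pos])
    rw [Real.sqrt_one] at h
    rw [hh0]; exact h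
  have hh0le : h0v ≤ 2 := by
    have h := Real.sqrt_le_sqrt (show 2 + 2 * c 0 ≤ (4:ℝ) by linarith [(hcle 0 h01).2])
    rw [hfour] at h
    rw [hh0]; exact h
  have hh1ge : 1 ≤ h1v := by
    have h := Real.sqrt_le_sqrt (show (1:ℝ) ≤ 2 + 2 * c 1 by linarith [hc1pos])
    rw [Real.sqrt_one] at h
    rw [hh1]; exact h
  have hh1le : h1v ≤ 2 := by
    have h := Real.sqrt_le_sqrt (show 2 + 2 * c 1 ≤ (4:ℝ) by linarith [(hcle 1 h11).2])
    rw [hfour] at h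
    rw [hh1]; exact h
  have htsval : Real.sqrt (2 + 2 * c ts) = 2 ∨ Real.sqrt (2 + 2 * c ts) = 0 := by
    rcases hcts with h | h
    · left; rw [h, show (2 + 2 * (1:ℝ)) = 4 by norm_num, hfour]
    · right; rw [h, show (2 + 2 * (-1:ℝ)) = 0 by norm_num, Real.sqrt_zero]
  -- variation bounds on the two subintervals
  have hψint1 : IntervalIntegrable ψ volume 0 ts := by
    apply hψint.mono_set
    rw [uIcc_of_le hts01.1, uIcc_of_le (by norm_num : (0:ℝ) ≤ 1)]
    exact Icc_subset_Icc le_rfl hts01.2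
  have hψint2 : IntervalIntegrable ψ volume ts 1 := by
    apply hψint.mono_set
    rw [uIcc_of_le hts01.2, uIcc_of_le (by norm_num : (0:ℝ) ≤ 1)]
    exact Icc_subset_Icc hts01.1 le_rfl
  have hc'le : ∀ t ∈ Icc (0:ℝ) 1, |c' t| ≤ ψ t * Real.sqrt (2 + 2 * c t) / 2 :=
    fun t ht => le_of_eq (hc'abs t ht)
  have hV1 := var_bound c c' ψ 0 ts hts01.1 le_rfl hts01.2 hcd hcle hc'meas hcmeas
    hc'le (fun t _ => hψnn t) hψint1
  have hV2 := var_bound c c' ψ ts 1 hts01.2 hts01.1 le_rfl hcd hcle hc'meas hcmeas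
    hc'le (fun t _ => hψnn t) hψint2
  -- lower bounds for the two pieces
  have hI1 : 2 * (2 - h0v) ≤ ∫ t in (0:ℝ)..ts, ψ t := by
    have hkey : 2 - h0v ≤ |Real.sqrt (2 + 2 * c ts) - Real.sqrt (2 + 2 * c 0)| := by
      rcases htsval with h | h
      · rw [h, ← hh0, abs_of_nonneg (by linarith : (0:ℝ) ≤ 2 - h0v)]
      · rw [h, ← hh0, zero_sub, abs_neg, abs_of_nonneg (by linarith : (0:ℝ) ≤ h0v)]
        linarith
    linarith [hV1, hkey]
  have hI2 : 2 * (2 - h1v) ≤ ∫ t in ts..(1:ℝ), ψ t := by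
    have hkey : 2 - h1v ≤ |Real.sqrt (2 + 2 * c 1) - Real.sqrt (2 + 2 * c ts)| := by
      rcases htsval with h | h
      · rw [h, ← hh1, abs_sub_comm, abs_of_nonneg (by linarith : (0:ℝ) ≤ 2 - h1v)]
      · rw [h, ← hh1, sub_zero, abs_of_nonneg (by linarith : (0:ℝ) ≤ h1v)]
        linarith
    linarith [hV2, hkey]
  -- total lower bound for ∫ψ
  have hsplit : (∫ t in (0:ℝ)..1, ψ t) =
      (∫ t in (0:ℝ)..ts, ψ t) + ∫ t in ts..(1:ℝ), ψ t :=
    (intervalIntegral.integral_add_adjacent_intervals hψint1 hψint2).symm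
  have hIlow : 2 * (4 - h0v - h1v) ≤ ∫ t in (0:ℝ)..1, ψ t := by
    rw [hsplit]; linarith [hI1, hI2]
  -- upper bound for ∫2ψ via AM-GM
  have hsq2 : (0:ℝ) < Real.sqrt 2 := Real.sqrt_pos.2 two_pos
  have s2 : Real.sqrt 2 * Real.sqrt 2 = 2 := Real.mul_self_sqrt (by norm_num)
  have hIup : (∫ t in (0:ℝ)..1, 2 * ψ t) ≤
      Real.sqrt 2 * ε * bend + 1 / (Real.sqrt 2 * ε) * (2 * len - 2 * chord) := by
    have hmono : (∫ t in (0:ℝ)..1, 2 * ψ t) ≤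
        ∫ t in (0:ℝ)..1, (Real.sqrt 2 * ε * ((|D t| / s t ^ 3) ^ 2 * s t) +
          1 / (Real.sqrt 2 * ε) * (2 * s t - 2 * p t / chord)) := by
      apply intervalIntegral.integral_mono_on (by norm_num : (0:ℝ) ≤ 1)
        (hψint.const_mul 2)
        ((hbendint'.const_mul (Real.sqrt 2 * ε)).add
          (hsfint.const_mul (1 / (Real.sqrt 2 * ε))))
      exact hAMGM
    have hsval : (∫ t in (0:ℝ)..1, (2 * s t - 2 * p t / chord)) = 2 * len - 2 * chord := by
      rw [intervalIntegral.integral_sub (f := fun t => 2 * s t) (g := fun t => 2 * p t / chord)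
        ((continuous_const.mul hscont).intervalIntegrable 0 1)
        (((continuous_const.mul hpcont).div_const chord).intervalIntegrable 0 1)]
      have h1 : (∫ t in (0:ℝ)..1, 2 * s t) = 2 * len := by
        rw [intervalIntegral.integral_const_mul, hlen]
      have h2 : (∫ t in (0:ℝ)..1, 2 * p t / chord) = 2 * chord := by
        have : (fun t => 2 * p t / chord) = fun t => (2 / chord) * p t := by
          funext t; field_simp
        rw [this, intervalIntegral.integral_const_mul, hpint]
        field_simp
      rw [h1, h2]
    have hval : (∫ t in (0:ℝ)..1, (Real.sqrt 2 * ε * ((|D t| / s t ^ 3) ^ 2 * s t) +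
        1 / (Real.sqrt 2 * ε) * (2 * s t - 2 * p t / chord))) =
        Real.sqrt 2 * ε * bend + 1 / (Real.sqrt 2 * ε) * (2 * len - 2 * chord) := by
      rw [intervalIntegral.integral_add (hbendint'.const_mul (Real.sqrt 2 * ε))
        (hsfint.const_mul (1 / (Real.sqrt 2 * ε)))]
      rw [intervalIntegral.integral_const_mul, intervalIntegral.integral_const_mul]
      rw [hsval, hbend']
    rw [← hval]
    exact hmono
  have hint2ψ : (∫ t in (0:ℝ)..1, 2 * ψ t) = 2 * ∫ t in (0:ℝ)..1, ψ t :=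
    intervalIntegral.integral_const_mul 2 ψ
  -- put everything together
  have hG : 4 * (4 - h0v - h1v) ≤ Real.sqrt 2 * (ε * bend + 1 / ε * (len - chord)) := by
    have he : Real.sqrt 2 * ε * bend + 1 / (Real.sqrt 2 * ε) * (2 * len - 2 * chord) =
        Real.sqrt 2 * (ε * bend + 1 / ε * (len - chord)) := by
      have hεne : ε ≠ 0 := ne_of_gt hε
      have hsne : Real.sqrt 2 ≠ 0 := ne_of_gt hsq2
      field_simp
      linear_combination (chord - len) * s2
    calc 4 * (4 - h0v - h1v) ≤ 2 * ∫ t in (0:ℝ)..1, ψ t := by linarith [hIlow]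
      _ = ∫ t in (0:ℝ)..1, 2 * ψ t := hint2ψ.symm
      _ ≤ Real.sqrt 2 * ε * bend + 1 / (Real.sqrt 2 * ε) * (2 * len - 2 * chord) := hIup
      _ = Real.sqrt 2 * (ε * bend + 1 / ε * (len - chord)) := he
  -- rewrite the right-hand side of the goal
  have hrhs0 : Real.sqrt (1 + Real.cos θ0) = Real.sqrt 2 * h0v / 2 := by
    rw [hcos0, hh0, show (2 + 2 * c 0) = 2 * (1 + c 0) by ring,
      Real.sqrt_mul (by norm_num : (0:ℝ) ≤ 2)]
    rw [← mul_assoc, s2]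
    ring
  have hrhs1 : Real.sqrt (1 + Real.cos θ1) = Real.sqrt 2 * h1v / 2 := by
    rw [hcos1, hh1, show (2 + 2 * c 1) = 2 * (1 + c 1) by ring,
      Real.sqrt_mul (by norm_num : (0:ℝ) ≤ 2)]
    rw [← mul_assoc, s2]
    ring
  rw [hrhs0, hrhs1, ge_iff_le]
  -- final algebra: multiply hG by √2 / 2
  have hG2 := mul_le_mul_of_nonneg_left hG (by positivity : (0:ℝ) ≤ Real.sqrt 2 / 2)
  have e : Real.sqrt 2 / 2 * (Real.sqrt 2 * (ε * bend + 1 / ε * (len - chord))) =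
      ε * bend + 1 / ε * (len - chord) := by
    linear_combination ((ε * bend + 1 / ε * (len - chord)) / 2) * s2
  rw [e] at hG2
  linarith [hG2]
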